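/- Let n ≥ 1, p > 1, q = p/(p-1), b > 0, γ = b + 1/(p-1), σ = -(p/(nb)+p-1), a = -1/σ. The Barenblatt profile B(x) = (C-|x|^q)_+^{1/b} with unit mass satisfies N_b(B)·I_b(B) = (2/q)^{p/n}(qγ/b)^{p-1} π^{p/2} n (q(b+1)/(nb+q(b+1)))^σ (Γ(n/q)Γ(1/b+1)/(Γ(n/2)Γ(n/q+1/b+1)))^{p/n}, where N_b(B) = (∫B^{b+1})^σ and I_b(B) = (qγ/b)^{p-1} n. -/

import Mathlib

open MeasureTheory Set

lemma realBeta {a c : ℝ} (ha : 0 < a) (hc : 0 < c) :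
    ∫ x in (0:ℝ)..1, x ^ (a - 1) * (1 - x) ^ (c - 1)
      = Real.Gamma a * Real.Gamma c / Real.Gamma (a + c) := by
  have hB : Complex.betaIntegral (a : ℂ) (c : ℂ)
      = ((∫ x in (0:ℝ)..1, x ^ (a - 1) * (1 - x) ^ (c - 1) : ℝ) : ℂ) := by
    rw [Complex.betaIntegral, ← intervalIntegral.integral_ofReal]
    refine intervalIntegral.integral_congr fun x hx => ?_
    rw [Set.uIcc_of_le zero_le_one] at hx
    have hx0 : (0:ℝ) ≤ x := hx.1
    have hx1 : (0:ℝ) ≤ 1 - x := by linarith [hx.2]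
    rw [show ((a:ℂ) - 1) = ((a - 1 : ℝ) : ℂ) by push_cast; ring,
      show ((c:ℂ) - 1) = ((c - 1 : ℝ) : ℂ) by push_cast; ring,
      show (1 - (x:ℂ)) = ((1 - x : ℝ) : ℂ) by push_cast; ring,
      ← Complex.ofReal_cpow hx0, ← Complex.ofReal_cpow hx1, ← Complex.ofReal_mul]
  have h := Complex.Gamma_mul_Gamma_eq_betaIntegral
    (s := (a : ℂ)) (t := (c : ℂ)) (by simpa using ha) (by simpa using hc)
  rw [hB, ← Complex.ofReal_add, Complex.Gamma_ofReal, Complex.Gamma_ofReal,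
    Complex.Gamma_ofReal, ← Complex.ofReal_mul, ← Complex.ofReal_mul] at h
  have h' := Complex.ofReal_inj.mp h
  have hG : Real.Gamma (a + c) ≠ 0 := (Real.Gamma_pos_of_pos (by linarith)).ne'
  field_simp
  linarith [h']

set_option maxHeartbeats 2000000

lemma keyIntegral (n : ℕ) (hn : 1 ≤ n) (q s C : ℝ) (hq : 0 < q) (hs : 0 < s) (hC : 0 < C) :
    ∫ x : EuclideanSpace ℝ (Fin n), max (C - ‖x‖ ^ q) 0 ^ s
      = C ^ ((n : ℝ) / q + s) * ((2 / q) * (Real.pi ^ ((n : ℝ) / 2) / Real.Gamma ((n : ℝ) / 2)) *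
          (Real.Gamma ((n : ℝ) / q) * Real.Gamma (s + 1) / Real.Gamma ((n : ℝ) / q + s + 1))) := by
  have hn0 : (0:ℝ) < (n:ℝ) := by exact_mod_cast hn
  haveI : Nonempty (Fin n) := ⟨⟨0, hn⟩⟩
  haveI : Nontrivial (EuclideanSpace ℝ (Fin n)) := by
    refine ⟨EuclideanSpace.single ⟨0, hn⟩ 1, 0, fun h => ?_⟩
    have := congrArg (fun v : EuclideanSpace ℝ (Fin n) => v ⟨0, hn⟩) h
    simp [EuclideanSpace.single] at this
  have hdim : Module.finrank ℝ (EuclideanSpace ℝ (Fin n)) = n := by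
    simp [finrank_euclideanSpace]
  have hmain := integral_fun_norm_addHaar (volume : Measure (EuclideanSpace ℝ (Fin n)))
    (fun y : ℝ => max (C - y ^ q) 0 ^ s)
  rw [hdim] at hmain
  rw [hmain]
  have hΓ2 : (0:ℝ) < Real.Gamma ((n:ℝ)/2) := Real.Gamma_pos_of_pos (by positivity)
  have hvol : ((volume : Measure (EuclideanSpace ℝ (Fin n))) (Metric.ball 0 1)).toReal
      = Real.pi ^ ((n:ℝ)/2) / Real.Gamma ((n:ℝ)/2 + 1) := by
    rw [EuclideanSpace.volume_ball]
    have hsqrt : Real.sqrt Real.pi ^ (Fintype.card (Fin n))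
        = Real.pi ^ ((Fintype.card (Fin n) : ℝ)/2) := by
      rw [Real.sqrt_eq_rpow, ← Real.rpow_natCast (Real.pi ^ ((1:ℝ)/2)),
        ← Real.rpow_mul Real.pi_nonneg]
      ring_nf
    rw [hsqrt]
    simp only [Fintype.card_fin, ENNReal.ofReal_one, one_pow, one_mul]
    rw [ENNReal.toReal_ofReal (by positivity)]
  rw [measureReal_def, hvol]
  -- step 1 : substitution y = x^q on the radial integral
  have h1 : (∫ y in Ioi (0:ℝ), y ^ (n-1) • max (C - y ^ q) 0 ^ s)
      = (1/q) * ∫ t in Ioi (0:ℝ), t ^ ((n:ℝ)/q - 1) * max (C - t) 0 ^ s := by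
    rw [← integral_comp_rpow_Ioi_of_pos
      (g := fun t => t ^ ((n:ℝ)/q - 1) * max (C - t) 0 ^ s) hq, ← integral_const_mul]
    refine setIntegral_congr_fun measurableSet_Ioi fun x hx => ?_
    have hx0 : (0:ℝ) < x := hx
    have hxq : (x ^ q) ^ ((n:ℝ)/q - 1) = x ^ (q * ((n:ℝ)/q - 1)) :=
      (Real.rpow_mul hx0.le _ _).symm
    have hnat : (x : ℝ) ^ (n - 1) = x ^ ((n:ℝ) - 1) := by
      rw [← Real.rpow_natCast x (n-1), Nat.cast_sub hn, Nat.cast_one]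
    have hqq : q * ((n:ℝ)/q - 1) = (n:ℝ) - q := by field_simp
    have hsplit : x ^ ((n:ℝ) - 1) = x ^ (q - 1) * x ^ ((n:ℝ) - q) := by
      rw [← Real.rpow_add hx0]; ring_nf
    simp only [smul_eq_mul]
    rw [hxq, hnat, hqq, hsplit]
    field_simp
  -- step 2 : scaling t = C * u
  have h2 : (∫ t in Ioi (0:ℝ), t ^ ((n:ℝ)/q - 1) * max (C - t) 0 ^ s)
      = C ^ ((n:ℝ)/q + s) * ∫ u in Ioi (0:ℝ), u ^ ((n:ℝ)/q - 1) * max (1 - u) 0 ^ s := by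
    have hscale := integral_comp_mul_left_Ioi
      (g := fun t => t ^ ((n:ℝ)/q - 1) * max (C - t) 0 ^ s) 0 hC
    rw [mul_zero] at hscale
    have hptwise : ∀ u ∈ Ioi (0:ℝ), (C * u) ^ ((n:ℝ)/q - 1) * max (C - C * u) 0 ^ s
        = (C ^ ((n:ℝ)/q - 1) * C ^ s) * (u ^ ((n:ℝ)/q - 1) * max (1 - u) 0 ^ s) := by
      intro u hu
      have hu0 : (0:ℝ) < u := hu
      rw [Real.mul_rpow hC.le hu0.le,
        show C - C * u = C * (1 - u) by ring,
        show C * (1 - u) ⊔ 0 = C * ((1 - u) ⊔ 0) by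
          rw [mul_max_of_nonneg _ _ hC.le, mul_zero],
        Real.mul_rpow hC.le (le_max_right _ _)]
      ring
    calc (∫ t in Ioi (0:ℝ), t ^ ((n:ℝ)/q - 1) * max (C - t) 0 ^ s)
        = C * ∫ x in Ioi (0:ℝ), (C * x) ^ ((n:ℝ)/q - 1) * max (C - C * x) 0 ^ s := by
          rw [hscale, smul_eq_mul, ← mul_assoc, mul_inv_cancel₀ hC.ne', one_mul]
      _ = C * ∫ x in Ioi (0:ℝ), (C ^ ((n:ℝ)/q - 1) * C ^ s) *
            (x ^ ((n:ℝ)/q - 1) * max (1 - x) 0 ^ s) := by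
          congr 1
          exact setIntegral_congr_fun measurableSet_Ioi hptwise
      _ = C ^ ((n:ℝ)/q + s) * ∫ u in Ioi (0:ℝ), u ^ ((n:ℝ)/q - 1) * max (1 - u) 0 ^ s := by
          rw [integral_const_mul, ← mul_assoc,
            show C * (C ^ ((n:ℝ)/q - 1) * C ^ s) = C ^ ((n:ℝ)/q + s) by
              rw [show C * (C ^ ((n:ℝ)/q - 1) * C ^ s)
                  = C ^ (1:ℝ) * C ^ ((n:ℝ)/q - 1) * C ^ s by rw [Real.rpow_one]; ring,
                ← Real.rpow_add hC, ← Real.rpow_add hC]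
              ring_nf]
  have h3 : (∫ u in Ioi (0:ℝ), u ^ ((n:ℝ)/q - 1) * max (1 - u) 0 ^ s)
      = Real.Gamma ((n:ℝ)/q) * Real.Gamma (s+1) / Real.Gamma ((n:ℝ)/q + (s+1)) := by
    have hsub : (∫ u in Ioi (0:ℝ), u ^ ((n:ℝ)/q - 1) * max (1 - u) 0 ^ s)
        = ∫ u in Ioc (0:ℝ) 1, u ^ ((n:ℝ)/q - 1) * max (1 - u) 0 ^ s := by
      have h := setIntegral_eq_of_subset_of_forall_diff_eq_zero (μ := volume)
        (t := Ioi (0:ℝ)) (s := Ioc (0:ℝ) 1)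
        (f := fun u : ℝ => u ^ ((n:ℝ)/q - 1) * max (1 - u) 0 ^ s)
        measurableSet_Ioi Ioc_subset_Ioi_self ?_
      · exact h
      · intro x hx
        have hx1 : 1 < x := by
          rcases hx with ⟨hx0, hx2⟩
          by_contra hcon
          exact hx2 ⟨hx0, le_of_not_gt hcon⟩
        rw [max_eq_right (by linarith), Real.zero_rpow hs.ne', mul_zero]
    rw [hsub, ← intervalIntegral.integral_of_le zero_le_one,
      ← realBeta (a := (n:ℝ)/q) (c := s+1) (by positivity) (by positivity)]
    refine intervalIntegral.integral_congr fun x hx => ?_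
    rw [Set.uIcc_of_le zero_le_one] at hx
    rw [max_eq_left (by linarith [hx.2]), show s+1-1 = s by ring]
  rw [h1, h2, h3, nsmul_eq_mul, smul_eq_mul,
    Real.Gamma_add_one (show ((n:ℝ)/2) ≠ 0 by positivity)]
  have hG3 : Real.Gamma ((n:ℝ)/q + (s+1)) ≠ 0 :=
    (Real.Gamma_pos_of_pos (by positivity)).ne'
  rw [show (n:ℝ)/q + s + 1 = (n:ℝ)/q + (s+1) by ring]
  field_simp

theorem stmt18 (n : ℕ) (hn : 1 ≤ n) (p q b γ σ D C : ℝ) (hp : 1 < p)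
    (hq : q = p / (p - 1)) (hb : 0 < b) (hγ : γ = b + 1 / (p - 1))
    (hσ : σ = -(p / ((n : ℝ) * b) + p - 1))
    (hD : D = (2 / q) * (Real.pi ^ ((n : ℝ) / 2) / Real.Gamma ((n : ℝ) / 2)) *
        (Real.Gamma ((n : ℝ) / q) * Real.Gamma (1 / b + 1) / Real.Gamma ((n : ℝ) / q + 1 / b + 1)))
    (hC : C = D ^ (-(b * q) / ((n : ℝ) * b + q))) :
    (∫ x : EuclideanSpace ℝ (Fin n), ((max (C - ‖x‖ ^ q) 0) ^ (1 / b)) ^ (b + 1)) ^ σ *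
        ((q * γ / b) ^ (p - 1) * n)
      = (2 / q) ^ (p / (n : ℝ)) * (q * γ / b) ^ (p - 1) * Real.pi ^ (p / 2) * n *
        (q * (b + 1) / ((n : ℝ) * b + q * (b + 1))) ^ σ *
        ((Real.Gamma ((n : ℝ) / q) * Real.Gamma (1 / b + 1)) /
          (Real.Gamma ((n : ℝ) / 2) * Real.Gamma ((n : ℝ) / q + 1 / b + 1))) ^ (p / (n : ℝ)) := by
  have hn0 : (0:ℝ) < (n:ℝ) := by exact_mod_cast hn
  have hp1 : (0:ℝ) < p - 1 := by linarith
  have hq0 : 0 < q := by rw [hq]; positivity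
  have hg2 : 0 < Real.Gamma ((n:ℝ)/2) := Real.Gamma_pos_of_pos (by positivity)
  have hgq : 0 < Real.Gamma ((n:ℝ)/q) := Real.Gamma_pos_of_pos (by positivity)
  have hgb : 0 < Real.Gamma (1/b + 1) := Real.Gamma_pos_of_pos (by positivity)
  have hgqb : 0 < Real.Gamma ((n:ℝ)/q + 1/b + 1) := Real.Gamma_pos_of_pos (by positivity)
  have hDpos : 0 < D := by
    rw [hD]
    have hpi : (0:ℝ) < Real.pi ^ ((n:ℝ)/2) := Real.rpow_pos_of_pos Real.pi_pos _
    positivity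
  have hCpos : 0 < C := hC ▸ Real.rpow_pos_of_pos hDpos _
  -- rewrite integrand
  have hint : ∀ x : EuclideanSpace ℝ (Fin n),
      ((max (C - ‖x‖ ^ q) 0) ^ (1/b)) ^ (b+1) = max (C - ‖x‖ ^ q) 0 ^ (1/b + 1) := by
    intro x
    rw [← Real.rpow_mul (le_max_right _ _), show 1/b*(b+1) = 1/b + 1 by field_simp; ring]
  simp only [hint]
  rw [keyIntegral n hn q (1/b+1) C hq0 (by positivity) hCpos]
  -- simplify the Gamma quotient
  set r : ℝ := q * (b+1) / ((n:ℝ)*b + q*(b+1)) with hr_def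
  have hden : (0:ℝ) < (n:ℝ)*b + q*(b+1) := by positivity
  have hrpos : 0 < r := by rw [hr_def]; positivity
  have hg1' : Real.Gamma (1/b + 1 + 1) = (1/b+1) * Real.Gamma (1/b+1) :=
    Real.Gamma_add_one (by positivity)
  have hg2' : Real.Gamma ((n:ℝ)/q + (1/b+1) + 1)
      = ((n:ℝ)/q + 1/b + 1) * Real.Gamma ((n:ℝ)/q + 1/b + 1) := by
    rw [show (n:ℝ)/q + (1/b+1) + 1 = ((n:ℝ)/q + 1/b + 1) + 1 by ring]
    exact Real.Gamma_add_one (by positivity)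
  have hVal : (2/q) * (Real.pi ^ ((n:ℝ)/2) / Real.Gamma ((n:ℝ)/2)) *
      (Real.Gamma ((n:ℝ)/q) * Real.Gamma (1/b+1+1) / Real.Gamma ((n:ℝ)/q + (1/b+1) + 1))
      = D * r := by
    rw [hg1', hg2', hD, hr_def]
    have h1 : ((n:ℝ)/q + 1/b + 1) ≠ 0 := by positivity
    field_simp
    ring
  rw [hVal]
  -- now pure rpow algebra
  have hC1 : (0:ℝ) ≤ C ^ ((n:ℝ)/q + (1/b+1)) := (Real.rpow_pos_of_pos hCpos _).le
  rw [Real.mul_rpow hC1 (by positivity), Real.mul_rpow hDpos.le hrpos.le,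
    ← Real.rpow_mul hCpos.le, hC, ← Real.rpow_mul hDpos.le]
  rw [show D ^ (-(b * q) / ((n:ℝ) * b + q) * (((n:ℝ)/q + (1/b+1)) * σ)) * (D ^ σ * r ^ σ)
      = D ^ (-(b * q) / ((n:ℝ) * b + q) * (((n:ℝ)/q + (1/b+1)) * σ) + σ) * r ^ σ by
    rw [Real.rpow_add hDpos]; ring]
  have hnbq : (0:ℝ) < (n:ℝ)*b + q := by positivity
  have harith : -(b * q) / ((n:ℝ) * b + q) * (((n:ℝ)/q + (1/b+1)) * σ) + σ = p / (n:ℝ) := by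
    rw [hσ, hq] at *
    field_simp
    ring
  rw [harith]
  have hDsplit : D = (2/q) * ((Real.Gamma ((n:ℝ)/q) * Real.Gamma (1/b+1)) /
      (Real.Gamma ((n:ℝ)/2) * Real.Gamma ((n:ℝ)/q + 1/b + 1))) * Real.pi ^ ((n:ℝ)/2) := by
    rw [hD]; field_simp
  rw [hDsplit, Real.mul_rpow (by positivity) (Real.rpow_pos_of_pos Real.pi_pos _).le,
    Real.mul_rpow (by positivity) (by positivity), ← Real.rpow_mul Real.pi_nonneg,
    show (n:ℝ)/2 * (p/(n:ℝ)) = p/2 by field_simp]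
  ring
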